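/- Let X be a real symmetric Banach sequence space contained in c₀ and let γ be a continuous symmetric linear functional on X that vanishes on all canonical unit vectors eₙ. Then γ(x) = γ(x') for every x ∈ X, where x' is the closing up of x. -/
import Mathlib

open scoped Classical

/-- A Banach sequence space: a subspace of `ℕ → ℝ` with a complete monotone norm
such that the canonical unit vectors have norm one. -/
structure BanachSeqSpace where
  X : Submodule ℝ (ℕ → ℝ)
  N : (ℕ → ℝ) → ℝ
  N_nonneg : ∀ x ∈ X, 0 ≤ N x
  N_eq_zero : ∀ x ∈ X, N x = 0 → x = 0
  N_add : ∀ x ∈ X, ∀ y ∈ X, N (x + y) ≤ N x + N y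
  N_smul : ∀ (c : ℝ), ∀ x ∈ X, N (c • x) = |c| * N x
  complete : ∀ f : ℕ → ℕ → ℝ, (∀ k, f k ∈ X) →
    (∀ ε : ℝ, 0 < ε → ∃ K, ∀ m ≥ K, ∀ n ≥ K, N (f m - f n) < ε) →
    ∃ x ∈ X, ∀ ε : ℝ, 0 < ε → ∃ K, ∀ k ≥ K, N (f k - x) < ε
  mono_mem : ∀ (x : ℕ → ℝ), ∀ y ∈ X, (∀ n, |x n| ≤ |y n|) → x ∈ X
  mono_norm : ∀ (x : ℕ → ℝ), ∀ y ∈ X, (∀ n, |x n| ≤ |y n|) → N x ≤ N y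
  unit_mem : ∀ k : ℕ, (fun n => if n = k then (1 : ℝ) else 0) ∈ X
  unit_norm : ∀ k : ℕ, N (fun n => if n = k then (1 : ℝ) else 0) = 1

/-- A Banach sequence space is symmetric if it is stable under permutations of the
coordinates, with equal norm. -/
def IsSymmetric (S : BanachSeqSpace) : Prop :=
  ∀ x ∈ S.X, ∀ σ : Equiv.Perm ℕ, (x ∘ σ) ∈ S.X ∧ S.N (x ∘ σ) = S.N x

/-- The decreasing rearrangement of a (bounded) sequence, indexed from 0:
`dstar x n` is the paper's `x*_(n+1) = inf { sup_{k ∉ J} |x k| : |J| ≤ n }`. -/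
noncomputable def dstar (x : ℕ → ℝ) (n : ℕ) : ℝ :=
  sInf {a : ℝ | ∃ J : Finset ℕ, J.card ≤ n ∧ a = sSup {b : ℝ | ∃ k, k ∉ J ∧ b = |x k|}}

/-- The closing up of a sequence: its nonzero terms in order, padded with zeros. -/
noncomputable def closingUp (x : ℕ → ℝ) (n : ℕ) : ℝ :=
  if {k | x k ≠ 0}.Infinite ∨ n < {k | x k ≠ 0}.ncard
  then x (Nat.nth (fun k => x k ≠ 0) n) else 0

open Filter

/-- There is a permutation of `ℕ` agreeing with an injection `f` on `q` and avoiding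
`f '' q` off `q`, provided both complements are infinite. -/
lemma exists_perm_transfer (f : ℕ → ℕ) (hf : Function.Injective f) (q : Set ℕ)
    (hq : ((f '' q)ᶜ : Set ℕ).Infinite) (hqc : (qᶜ : Set ℕ).Infinite) :
    ∃ σ : Equiv.Perm ℕ, (∀ n ∈ q, σ n = f n) ∧ ∀ n ∉ q, σ n ∉ f '' q := by
  haveI : Infinite (qᶜ : Set ℕ) := hqc.to_subtype
  haveI : Infinite ((f '' q)ᶜ : Set ℕ) := hq.to_subtype
  haveI := Nat.Subtype.denumerable (qᶜ : Set ℕ)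
  haveI := Nat.Subtype.denumerable ((f '' q)ᶜ : Set ℕ)
  let e1 : q ≃ (f '' q : Set ℕ) := Equiv.Set.image f q hf
  let e2 : (qᶜ : Set ℕ) ≃ ((f '' q)ᶜ : Set ℕ) :=
    (Denumerable.eqv _).trans (Denumerable.eqv _).symm
  let σ : Equiv.Perm ℕ :=
    (Equiv.Set.sumCompl q).symm.trans ((e1.sumCongr e2).trans (Equiv.Set.sumCompl (f '' q)))
  refine ⟨σ, ?_, ?_⟩
  · intro n hn
    simp only [σ, Equiv.trans_apply, Equiv.Set.sumCompl_symm_apply_of_mem hn,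
      Equiv.sumCongr_apply, Sum.map_inl, Equiv.Set.sumCompl_apply_inl]
    rfl
  · intro n hn
    simp only [σ, Equiv.trans_apply, Equiv.Set.sumCompl_symm_apply_of_notMem hn,
      Equiv.sumCongr_apply, Sum.map_inr, Equiv.Set.sumCompl_apply_inr]
    exact (e2 ⟨n, hn⟩).2

/-- A linear functional vanishing on the unit vectors vanishes on every finitely
supported sequence (and such sequences belong to the space). -/
lemma finsupp_gamma_zero (S : BanachSeqSpace) (γ : (ℕ → ℝ) → ℝ)
    (hadd : ∀ x ∈ S.X, ∀ y ∈ S.X, γ (x + y) = γ x + γ y)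
    (hsmul : ∀ (c : ℝ), ∀ x ∈ S.X, γ (c • x) = c * γ x)
    (hunits : ∀ k : ℕ, γ (fun n => if n = k then (1 : ℝ) else 0) = 0) :
    ∀ (F : Finset ℕ) (w : ℕ → ℝ), (∀ k ∉ F, w k = 0) → w ∈ S.X ∧ γ w = 0 := by
  intro F
  induction F using Finset.induction_on with
  | empty =>
    intro w hw
    have hw0 : w = 0 := funext fun k => hw k (Finset.notMem_empty k)
    subst hw0
    have h0 : ((0 : ℝ) • (0 : ℕ → ℝ)) = (0 : ℕ → ℝ) := by simp
    refine ⟨S.X.zero_mem, ?_⟩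
    have := hsmul 0 0 S.X.zero_mem
    rw [h0] at this
    simpa using this
  | @insert k F hk ih =>
    intro w hw
    set e : ℕ → ℝ := fun n => if n = k then (1 : ℝ) else 0 with he_def
    have he : e ∈ S.X := S.unit_mem k
    set w' := Function.update w k 0 with hw'_def
    have hw' : ∀ j ∉ F, w' j = 0 := by
      intro j hj
      by_cases h : j = k
      · subst h; simp [w']
      · rw [hw'_def, Function.update_of_ne h]
        exact hw j (by simp [h, hj])
    obtain ⟨hm', hg'⟩ := ih w' hw'
    have hsm : w k • e ∈ S.X := S.X.smul_mem _ he
    have hw_eq : w = w' + w k • e := by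
      funext j
      by_cases h : j = k
      · subst h; simp [w', e]
      · simp [w', e, Function.update_of_ne h, h]
    refine ⟨hw_eq ▸ S.X.add_mem hm' hsm, ?_⟩
    rw [hw_eq, hadd _ hm' _ hsm, hg', hsmul _ _ he, hunits k]
    ring

/-- A continuous symmetric linear functional on a symmetric Banach sequence space
contained in `c₀` which vanishes on the unit vectors satisfies `γ x = γ x'`,
where `x'` is the closing up of `x`. -/
theorem symmetric_functional_closingUp (S : BanachSeqSpace)
    (hsym : IsSymmetric S)
    (hc0 : ∀ x ∈ S.X, Tendsto x atTop (nhds 0))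
    (γ : (ℕ → ℝ) → ℝ)
    (hadd : ∀ x ∈ S.X, ∀ y ∈ S.X, γ (x + y) = γ x + γ y)
    (hsmul : ∀ (c : ℝ), ∀ x ∈ S.X, γ (c • x) = c * γ x)
    (hcont : ∃ C : ℝ, ∀ x ∈ S.X, |γ x| ≤ C * S.N x)
    (hγsym : ∀ x ∈ S.X, ∀ σ : Equiv.Perm ℕ, γ (x ∘ σ) = γ x)
    (hunits : ∀ k : ℕ, γ (fun n => if n = k then (1 : ℝ) else 0) = 0) :
    ∀ x ∈ S.X, γ x = γ (closingUp x) := by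
  intro x hx
  by_cases hP : {k | x k ≠ 0}.Infinite
  · -- infinite support case
    set p : ℕ → Prop := fun k => x k ≠ 0 with hp_def
    have hPf : (setOf p).Infinite := hP
    set f : ℕ → ℕ := Nat.nth p with hf_def
    have hfinj : Function.Injective f := Nat.nth_injective hPf
    have hcl : closingUp x = fun n => x (f n) := by
      funext n
      simp only [closingUp]
      rw [if_pos (Or.inl hP)]
    have hev : ({n : ℕ | Even n} : Set ℕ).Infinite :=
      Set.infinite_of_injective_forall_mem (f := fun n : ℕ => 2 * n)
        (fun a b h => by simpa using h) (fun n => ⟨n, two_mul n⟩)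
    have hodd : (({n : ℕ | Even n} : Set ℕ)ᶜ : Set ℕ).Infinite :=
      Set.infinite_of_injective_forall_mem (f := fun n : ℕ => 2 * n + 1)
        (fun a b h => by simpa using h)
        (fun n => by simp [Set.mem_compl_iff, Nat.even_add_one])
    set E : Set ℕ := f '' {n : ℕ | Even n} with hE_def
    set O : Set ℕ := f '' ({n : ℕ | Even n}ᶜ) with hO_def
    have hdisj : ∀ k, k ∈ E → k ∈ O → False := by
      rintro k ⟨n, hn, rfl⟩ ⟨m, hm, heq⟩
      exact hm (by rw [hfinj heq]; exact hn)
    have hOsubEc : O ⊆ Eᶜ := fun k hk hk' => hdisj k hk' hk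
    have hEsubOc : E ⊆ Oᶜ := fun k hk hk' => hdisj k hk hk'
    have hEc : (Eᶜ : Set ℕ).Infinite := ((hodd.image hfinj.injOn)).mono hOsubEc
    have hOc : (Oᶜ : Set ℕ).Infinite := ((hev.image hfinj.injOn)).mono hEsubOc
    set a : ℕ → ℝ := fun k => if k ∈ E then x k else 0 with ha_def
    set b : ℕ → ℝ := fun k => if k ∈ O then x k else 0 with hb_def
    have ha : a ∈ S.X := by
      refine S.mono_mem a x hx fun n => ?_
      by_cases h : n ∈ E
      · simp [a, h]
      · simp [a, h]
    have hb : b ∈ S.X := by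
      refine S.mono_mem b x hx fun n => ?_
      by_cases h : n ∈ O
      · simp [b, h]
      · simp [b, h]
    have hab : x = a + b := by
      funext k
      by_cases hE : k ∈ E
      · have hO : k ∉ O := fun h => hdisj k hE h
        simp [a, b, hE, hO]
      · by_cases hO : k ∈ O
        · simp [a, b, hE, hO]
        · have hxk : x k = 0 := by
            by_contra hxk
            obtain ⟨n, rfl⟩ := Nat.subset_range_nth (show k ∈ setOf p from hxk)
            by_cases hn : Even n
            · exact hE ⟨n, hn, rfl⟩
            · exact hO ⟨n, hn, rfl⟩
          simp [a, b, hE, hO, hxk]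
    set u : ℕ → ℝ := fun n => if Even n then x (f n) else 0 with hu_def
    set v : ℕ → ℝ := fun n => if Even n then 0 else x (f n) with hv_def
    obtain ⟨σ, hσ1, hσ2⟩ := exists_perm_transfer f hfinj {n : ℕ | Even n} hEc hodd
    have hqcc : ((({n : ℕ | Even n}ᶜ : Set ℕ))ᶜ : Set ℕ).Infinite := by
      rw [compl_compl]; exact hev
    obtain ⟨τ, hτ1, hτ2⟩ := exists_perm_transfer f hfinj ({n : ℕ | Even n}ᶜ) hOc hqcc
    have hau : a ∘ σ = u := by
      funext n
      by_cases hn : Even n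
      · have h1 : σ n = f n := hσ1 n hn
        have h2 : f n ∈ E := ⟨n, hn, rfl⟩
        simp [a, u, Function.comp_apply, h1, h2, hn]
      · have h2 : σ n ∉ E := hσ2 n hn
        simp [a, u, Function.comp_apply, h2, hn]
    have hbv : b ∘ τ = v := by
      funext n
      by_cases hn : Even n
      · have h2 : τ n ∉ O := hτ2 n (by simp [hn])
        simp [b, v, Function.comp_apply, h2, hn]
      · have h1 : τ n = f n := hτ1 n (by simp [hn])
        have h2 : f n ∈ O := ⟨n, hn, rfl⟩
        simp [b, v, Function.comp_apply, h1, h2, hn]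
    have hu_mem : u ∈ S.X := by
      have := (hsym a ha σ).1; rwa [hau] at this
    have hv_mem : v ∈ S.X := by
      have := (hsym b hb τ).1; rwa [hbv] at this
    have hγu : γ u = γ a := by
      have := hγsym a ha σ; rwa [hau] at this
    have hγv : γ v = γ b := by
      have := hγsym b hb τ; rwa [hbv] at this
    have huv : u + v = closingUp x := by
      funext n
      rw [hcl]
      by_cases hn : Even n
      · simp [u, v, hn]
      · simp [u, v, hn]
    calc γ x = γ (a + b) := by rw [← hab]
      _ = γ a + γ b := hadd a ha b hb
      _ = γ u + γ v := by rw [hγu, hγv]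
      _ = γ (u + v) := (hadd u hu_mem v hv_mem).symm
      _ = γ (closingUp x) := by rw [huv]
  · -- finite support case
    rw [Set.not_infinite] at hP
    have hx0 : γ x = 0 := by
      refine (finsupp_gamma_zero S γ hadd hsmul hunits hP.toFinset x fun k hk => ?_).2
      by_contra h
      exact hk (hP.mem_toFinset.mpr h)
    have hcl0 : γ (closingUp x) = 0 := by
      refine (finsupp_gamma_zero S γ hadd hsmul hunits
        (Finset.range ({k | x k ≠ 0}.ncard)) (closingUp x) fun k hk => ?_).2
      simp only [closingUp]
      rw [if_neg]
      rintro (h | h)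
      · exact hP.not_infinite h
      · exact hk (Finset.mem_range.mpr h)
    rw [hx0, hcl0]
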